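/- Let λ ∈ ℝ with λ ≠ 0, T > 0, B > 0. Then the infimum, over all measurable w : [0,T] → ℝ with w(t) > 0 almost everywhere, t ↦ e^{λ(T−t)}·w(t) integrable, and ∫₀ᵀ w(t)^{−2} dt ≤ B, of the quantity ∫₀ᵀ e^{λ(T−t)}·w(t) dt, equals B^{−1/2}·( 3(e^{2λT/3} − 1)/(2λ) )^{3/2}, and the infimum is attained at w(t) = (I/B)^{1/2}·e^{−λ(T−t)/3} where I = 3(e^{2λT/3} − 1)/(2λ). -/

import Mathlib

open MeasureTheory Set

lemma exp_integral_aux (c T : ℝ) (hc : c ≠ 0) :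
    ∫ t in (0:ℝ)..T, Real.exp (c * (T - t)) = (Real.exp (c * T) - 1) / c := by
  have h : ∀ t ∈ Set.uIcc (0:ℝ) T, HasDerivAt (fun t => Real.exp (c * (T - t)) / (-c))
      (Real.exp (c * (T - t))) t := by
    intro t _
    have h1 : HasDerivAt (fun t : ℝ => c * (T - t)) (-c) t := by
      simpa using ((hasDerivAt_id t).const_sub T).const_mul c
    have h2 := (Real.hasDerivAt_exp (c * (T - t))).comp t h1
    have h3 := h2.div_const (-c)
    convert h3 using 1
    · rfl
    · rfl
    · rfl
    field_simp
  have hcont : IntervalIntegrable (fun t => Real.exp (c * (T - t))) volume 0 T :=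
    (Real.continuous_exp.comp (continuous_const.mul (continuous_const.sub continuous_id))).intervalIntegrable 0 T
  rw [intervalIntegral.integral_eq_sub_of_hasDerivAt h hcont]
  simp only [sub_self, mul_zero, Real.exp_zero, sub_zero]
  field_simp
  ring_nf

/-- The infimum over all measurable a.e.-positive `w` on `[0,T]` with
`e^{λ(T−t)} w t` integrable and budget `∫₀ᵀ (w t)⁻² dt ≤ B` of `∫₀ᵀ e^{λ(T−t)} w t dt`
equals `B^{−1/2} (3(e^{2λT/3}−1)/(2λ))^{3/2}`, and is attained at
`w t = (I/B)^{1/2} e^{−λ(T−t)/3}` with `I = 3(e^{2λT/3}−1)/(2λ)`. -/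
theorem stmt_5 (lam T B : ℝ) (hlam : lam ≠ 0) (hT : 0 < T) (hB : 0 < B) :
    IsLeast {y : ℝ | ∃ w : ℝ → ℝ, Measurable w ∧
        (∀ᵐ t ∂(volume.restrict (Icc (0:ℝ) T)), 0 < w t) ∧
        IntegrableOn (fun t => Real.exp (lam * (T - t)) * w t) (Icc 0 T) ∧
        (∫⁻ t in Icc (0:ℝ) T, ENNReal.ofReal ((w t ^ 2)⁻¹)) ≤ ENNReal.ofReal B ∧
        y = ∫ t in (0:ℝ)..T, Real.exp (lam * (T - t)) * w t}
      (B ^ (-(1:ℝ)/2) * (3 * (Real.exp (2 * lam * T / 3) - 1) / (2 * lam)) ^ ((3:ℝ)/2)) ∧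
    ∀ w : ℝ → ℝ,
      (∀ t, w t = ((3 * (Real.exp (2 * lam * T / 3) - 1) / (2 * lam)) / B) ^ ((1:ℝ)/2) *
          Real.exp (-(lam * (T - t)) / 3)) →
      ((∫⁻ t in Icc (0:ℝ) T, ENNReal.ofReal ((w t ^ 2)⁻¹)) ≤ ENNReal.ofReal B ∧
        (∫ t in (0:ℝ)..T, Real.exp (lam * (T - t)) * w t) =
          B ^ (-(1:ℝ)/2) * (3 * (Real.exp (2 * lam * T / 3) - 1) / (2 * lam)) ^ ((3:ℝ)/2)) := by
  set I : ℝ := 3 * (Real.exp (2 * lam * T / 3) - 1) / (2 * lam) with hIdef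
  have hc : (2 * lam / 3 : ℝ) ≠ 0 := by
    exact div_ne_zero (mul_ne_zero two_ne_zero hlam) three_ne_zero
  have hIeq : ∫ t in (0:ℝ)..T, Real.exp (2 * lam / 3 * (T - t)) = I := by
    rw [exp_integral_aux (2 * lam / 3) T hc, hIdef,
      show 2 * lam / 3 * T = 2 * lam * T / 3 by ring]
    field_simp
  have hI : 0 < I := by
    rcases hlam.lt_or_gt with h | h
    · have he : Real.exp (2 * lam * T / 3) < 1 := by
        rw [← Real.exp_zero]
        exact Real.exp_lt_exp.mpr (by nlinarith)
      rw [hIdef]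
      exact div_pos_iff.mpr (Or.inr ⟨by nlinarith, by nlinarith⟩)
    · have he : 1 < Real.exp (2 * lam * T / 3) := by
        rw [← Real.exp_zero]
        exact Real.exp_lt_exp.mpr (by nlinarith)
      rw [hIdef]
      exact div_pos (by nlinarith) (by nlinarith)
  have hIB : 0 < I / B := div_pos hI hB
  have hBneg : B ^ (-(1:ℝ)/2) = (B ^ ((1:ℝ)/2))⁻¹ := by
    rw [show (-(1:ℝ)/2) = -((1:ℝ)/2) by norm_num, Real.rpow_neg hB.le]
  have hI32 : I ^ ((3:ℝ)/2) = I ^ ((1:ℝ)/2) * I := by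
    rw [show ((3:ℝ)/2) = (1:ℝ)/2 + 1 by norm_num, Real.rpow_add hI, Real.rpow_one]
  -- Part 2: the explicit minimizer
  have part2 : ∀ w : ℝ → ℝ,
      (∀ t, w t = (I / B) ^ ((1:ℝ)/2) * Real.exp (-(lam * (T - t)) / 3)) →
      ((∫⁻ t in Icc (0:ℝ) T, ENNReal.ofReal ((w t ^ 2)⁻¹)) ≤ ENNReal.ofReal B ∧
        (∫ t in (0:ℝ)..T, Real.exp (lam * (T - t)) * w t) =
          B ^ (-(1:ℝ)/2) * I ^ ((3:ℝ)/2)) := by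
    intro w hw
    set s : ℝ := (I / B) ^ ((1:ℝ)/2) with hsdef
    have hs : 0 < s := Real.rpow_pos_of_pos hIB _
    have hs2 : s ^ 2 = I / B := by
      rw [hsdef, ← Real.rpow_natCast ((I/B) ^ ((1:ℝ)/2)) 2, ← Real.rpow_mul hIB.le]
      norm_num
    have hbudeq : ∀ t : ℝ, ((w t) ^ 2)⁻¹ = (B / I) * Real.exp (2 * lam / 3 * (T - t)) := by
      intro t
      have he2 : Real.exp (-(lam * (T - t)) / 3) ^ 2
          = Real.exp (-(2 * lam / 3 * (T - t))) := by
        rw [sq, ← Real.exp_add]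
        congr 1
        ring
      rw [hw t, mul_pow, hs2, he2, Real.exp_neg, mul_inv, inv_inv, inv_div]
    have hcontb : Continuous fun t : ℝ => (B / I) * Real.exp (2 * lam / 3 * (T - t)) := by
      exact continuous_const.mul (Real.continuous_exp.comp (continuous_const.mul (continuous_const.sub continuous_id)))
    have hbudint : (∫⁻ t in Icc (0:ℝ) T, ENNReal.ofReal ((w t ^ 2)⁻¹)) = ENNReal.ofReal B := by
      have h1 : (∫⁻ t in Icc (0:ℝ) T, ENNReal.ofReal ((w t ^ 2)⁻¹))
          = ∫⁻ t in Icc (0:ℝ) T,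
              ENNReal.ofReal ((B / I) * Real.exp (2 * lam / 3 * (T - t))) := by
        simp only [hbudeq]
      rw [h1, ← MeasureTheory.ofReal_integral_eq_lintegral_ofReal
          (hcontb.integrableOn_Icc)
          (Filter.Eventually.of_forall fun t => by positivity)]
      congr 1
      rw [MeasureTheory.integral_Icc_eq_integral_Ioc,
        ← intervalIntegral.integral_of_le hT.le, intervalIntegral.integral_const_mul, hIeq]
      field_simp
    have hmaineq : ∀ t : ℝ, Real.exp (lam * (T - t)) * w t
        = s * Real.exp (2 * lam / 3 * (T - t)) := by
      intro t
      rw [hw t, mul_comm (Real.exp (lam * (T - t))), mul_assoc, ← Real.exp_add]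
      congr 2
      ring
    have hmain : (∫ t in (0:ℝ)..T, Real.exp (lam * (T - t)) * w t)
        = B ^ (-(1:ℝ)/2) * I ^ ((3:ℝ)/2) := by
      simp only [hmaineq]
      rw [intervalIntegral.integral_const_mul, hIeq, hsdef, hBneg, hI32,
        Real.div_rpow hI.le hB.le, div_eq_mul_inv]
      ring
    exact ⟨le_of_eq hbudint, hmain⟩
  refine ⟨⟨?_, ?_⟩, part2⟩
  · -- membership: the explicit minimizer is admissible
    set w₀ : ℝ → ℝ := fun t => (I / B) ^ ((1:ℝ)/2) * Real.exp (-(lam * (T - t)) / 3) with hw₀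
    have hcw : Continuous w₀ := continuous_const.mul (Real.continuous_exp.comp
      ((continuous_const.mul (continuous_const.sub continuous_id)).neg.div_const 3))
    obtain ⟨hbud₀, hval₀⟩ := part2 w₀ (fun t => rfl)
    refine ⟨w₀, hcw.measurable, Filter.Eventually.of_forall fun t =>
      mul_pos (Real.rpow_pos_of_pos hIB _) (Real.exp_pos _), ?_, hbud₀, hval₀.symm⟩
    exact ((Real.continuous_exp.comp
      (continuous_const.mul (continuous_const.sub continuous_id))).mul hcw).integrableOn_Icc
  · -- lower bound via Hölder's inequality
    rintro y ⟨w, hmeas, hpos, hint, hbud, rfl⟩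
    set μ := volume.restrict (Icc (0:ℝ) T) with hμ
    set J : ℝ := ∫ t in Icc (0:ℝ) T, Real.exp (lam * (T - t)) * w t with hJdef
    have hJJ : (∫ t in (0:ℝ)..T, Real.exp (lam * (T - t)) * w t) = J := by
      rw [hJdef, intervalIntegral.integral_of_le hT.le,
        MeasureTheory.integral_Icc_eq_integral_Ioc]
    have hnn : 0 ≤ᵐ[μ] fun t => Real.exp (lam * (T - t)) * w t :=
      hpos.mono fun t ht => (mul_pos (Real.exp_pos _) ht).le
    have hJnn : 0 ≤ J := MeasureTheory.integral_nonneg_of_ae hnn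
    set f : ℝ → ENNReal := fun t =>
      ENNReal.ofReal (Real.exp (lam * (T - t)) * w t) ^ ((2:ℝ)/3) with hfdef
    set g : ℝ → ENNReal := fun t => ENNReal.ofReal ((w t ^ 2)⁻¹) ^ ((1:ℝ)/3) with hgdef
    have hemeas : Measurable fun t : ℝ => Real.exp (lam * (T - t)) :=
      Real.measurable_exp.comp ((measurable_const.sub measurable_id).const_mul lam)
    have hfm : AEMeasurable f μ :=
      ((ENNReal.continuous_rpow_const.measurable).comp
        ((hemeas.mul hmeas).ennreal_ofReal)).aemeasurable
    have hgm : AEMeasurable g μ :=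
      ((ENNReal.continuous_rpow_const.measurable).comp
        (((hmeas.pow_const 2).inv).ennreal_ofReal)).aemeasurable
    have hpq : Real.HolderConjugate (3/2) 3 := ⟨by norm_num, by norm_num, by norm_num⟩
    have hHold := ENNReal.lintegral_mul_le_Lp_mul_Lq μ hpq hfm hgm
    have hf32 : ∀ t, f t ^ ((3:ℝ)/2)
        = ENNReal.ofReal (Real.exp (lam * (T - t)) * w t) := by
      intro t
      rw [hfdef, ← ENNReal.rpow_mul]
      norm_num
    have hg3 : ∀ t, g t ^ ((3:ℝ)) = ENNReal.ofReal ((w t ^ 2)⁻¹) := by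
      intro t
      rw [hgdef, ← ENNReal.rpow_mul]
      norm_num
    have hfg : (fun t => (f * g) t) =ᵐ[μ]
        fun t => ENNReal.ofReal (Real.exp (2 * lam / 3 * (T - t))) := by
      refine hpos.mono fun t ht => ?_
      have hep : (0:ℝ) < Real.exp (lam * (T - t)) * w t := mul_pos (Real.exp_pos _) ht
      have hwp : (0:ℝ) < (w t ^ 2)⁻¹ := inv_pos.mpr (pow_pos ht 2)
      show f t * g t = _
      rw [hfdef, hgdef]
      simp only
      rw [ENNReal.ofReal_rpow_of_pos hep, ENNReal.ofReal_rpow_of_pos hwp,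
        ← ENNReal.ofReal_mul (Real.rpow_nonneg hep.le _)]
      congr 1
      have hw2 : ((w t ^ 2 : ℝ))⁻¹ ^ ((1:ℝ)/3) = (w t ^ ((2:ℝ)/3))⁻¹ := by
        rw [Real.inv_rpow (pow_nonneg ht.le 2), ← Real.rpow_natCast (w t) 2,
          ← Real.rpow_mul ht.le]
        norm_num
      rw [Real.mul_rpow (Real.exp_pos _).le ht.le, hw2, mul_assoc,
        mul_inv_cancel₀ (Real.rpow_pos_of_pos ht _).ne', mul_one, ← Real.exp_mul]
      congr 1
      ring
    have hLHS : (∫⁻ t, (f * g) t ∂μ) = ENNReal.ofReal I := by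
      have hcont2 : Continuous fun t : ℝ => Real.exp (2 * lam / 3 * (T - t)) :=
        Real.continuous_exp.comp (continuous_const.mul (continuous_const.sub continuous_id))
      rw [lintegral_congr_ae hfg,
        ← MeasureTheory.ofReal_integral_eq_lintegral_ofReal
          hcont2.integrableOn_Icc
          (Filter.Eventually.of_forall fun t => (Real.exp_pos _).le)]
      congr 1
      rw [MeasureTheory.integral_Icc_eq_integral_Ioc, ← intervalIntegral.integral_of_le hT.le,
        hIeq]
    have hF : (∫⁻ t, f t ^ ((3:ℝ)/2) ∂μ) = ENNReal.ofReal J := by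
      simp only [hf32]
      rw [← MeasureTheory.ofReal_integral_eq_lintegral_ofReal hint hnn]
    have hG : (∫⁻ t, g t ^ ((3:ℝ)) ∂μ) ≤ ENNReal.ofReal B := by
      simp only [hg3]
      exact hbud
    rw [hLHS] at hHold
    have hHold2 : ENNReal.ofReal I
        ≤ ENNReal.ofReal J ^ ((2:ℝ)/3) * ENNReal.ofReal B ^ ((1:ℝ)/3) := by
      refine hHold.trans ?_
      rw [show (1 / (3/2 : ℝ)) = (2:ℝ)/3 by norm_num, show (1 / (3:ℝ)) = (1:ℝ)/3 by norm_num]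
      rw [hF]
      exact mul_le_mul_right (ENNReal.rpow_le_rpow hG (by norm_num)) _
    have hreal : I ≤ J ^ ((2:ℝ)/3) * B ^ ((1:ℝ)/3) := by
      rw [ENNReal.ofReal_rpow_of_nonneg hJnn (by norm_num),
        ENNReal.ofReal_rpow_of_nonneg hB.le (by norm_num),
        ← ENNReal.ofReal_mul (Real.rpow_nonneg hJnn _)] at hHold2
      exact (ENNReal.ofReal_le_ofReal_iff (by positivity)).mp hHold2
    have h32 := Real.rpow_le_rpow hI.le hreal (by norm_num : (0:ℝ) ≤ 3/2)
    rw [Real.mul_rpow (Real.rpow_nonneg hJnn _) (Real.rpow_nonneg hB.le _),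
      ← Real.rpow_mul hJnn, ← Real.rpow_mul hB.le] at h32
    norm_num at h32
    rw [hJJ, hBneg]
    rw [inv_mul_le_iff₀ (Real.rpow_pos_of_pos hB _)]
    calc I ^ ((3:ℝ)/2) ≤ J * B ^ ((1:ℝ)/2) := by
          convert h32 using 2 <;> norm_num
      _ = B ^ ((1:ℝ)/2) * J := by ring
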